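/- Let μ = diag(μ₁,…,μₙ) be a diagonal complex matrix, R an n×n complex matrix such that R_{αβ} ≠ 0 only if μ_α − μ_β is an integer, η an invertible n×n complex matrix, and C, S invertible n×n complex matrices. Assume the two identities S = C^{−1}·exp(−πi·R)·exp(−πi·μ)·η^{−1}·(Cᵀ)^{−1} and Sᵀ = C^{−1}·exp(πi·R)·exp(πi·μ)·η^{−1}·(Cᵀ)^{−1}. Then C·Sᵀ·S^{−1}·C^{−1} = exp(2πi·μ)·exp(2πi·R). (That is, the constraint C Sᵀ S^{−1} C^{−1} = M₀ on the monodromy data (μ, R, S, C) follows from the other two constraints.) -/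

import Mathlib

open Matrix Complex

theorem stmt5 (n : ℕ) (μ : Fin n → ℂ) (R η C S : Matrix (Fin n) (Fin n) ℂ)
    (hR : ∀ α β : Fin n, R α β ≠ 0 → ∃ k : ℤ, μ α - μ β = (k : ℂ))
    (hη : IsUnit η) (hC : IsUnit C) (hS : IsUnit S)
    (h1 : S = C⁻¹ * NormedSpace.exp ((-(Real.pi * I)) • R) *
        NormedSpace.exp ((-(Real.pi * I)) • (Matrix.diagonal μ)) * η⁻¹ * (Cᵀ)⁻¹)
    (h2 : Sᵀ = C⁻¹ * NormedSpace.exp ((Real.pi * I : ℂ) • R) *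
        NormedSpace.exp ((Real.pi * I : ℂ) • (Matrix.diagonal μ)) * η⁻¹ * (Cᵀ)⁻¹) :
    C * Sᵀ * S⁻¹ * C⁻¹ =
      NormedSpace.exp ((2 * Real.pi * I) • (Matrix.diagonal μ)) *
        NormedSpace.exp ((2 * Real.pi * I) • R) := by
  set E := NormedSpace.exp ((Real.pi * I : ℂ) • R) with hE
  set F := NormedSpace.exp ((Real.pi * I : ℂ) • (Matrix.diagonal μ)) with hF
  have hEneg : NormedSpace.exp ((-(Real.pi * I)) • R) = E⁻¹ := by
    rw [hE, ← Matrix.exp_neg, neg_smul]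
  have hFneg : NormedSpace.exp ((-(Real.pi * I)) • (Matrix.diagonal μ)) = F⁻¹ := by
    rw [hF, ← Matrix.exp_neg, neg_smul]
  have hEu : IsUnit E := Matrix.isUnit_exp _
  have hFu : IsUnit F := Matrix.isUnit_exp _
  have hCd : IsUnit C.det := (Matrix.isUnit_iff_isUnit_det C).mp hC
  have hCtd : IsUnit Cᵀ.det := by rwa [Matrix.det_transpose]
  have hηd : IsUnit η.det := (Matrix.isUnit_iff_isUnit_det η).mp hη
  have hEd : IsUnit E.det := (Matrix.isUnit_iff_isUnit_det E).mp hEu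
  have hFd : IsUnit F.det := (Matrix.isUnit_iff_isUnit_det F).mp hFu
  -- compute S⁻¹
  have hSinv : S⁻¹ = Cᵀ * η * F * E * C := by
    apply Matrix.inv_eq_right_inv
    rw [h1, hEneg, hFneg]
    simp only [Matrix.mul_assoc]
    rw [Matrix.nonsing_inv_mul_cancel_left _ _ hCtd,
      Matrix.nonsing_inv_mul_cancel_left _ _ hηd,
      Matrix.nonsing_inv_mul_cancel_left _ _ hFd,
      Matrix.nonsing_inv_mul_cancel_left _ _ hEd,
      Matrix.nonsing_inv_mul _ hCd]
  -- LHS simplifies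
  have key : C * Sᵀ * S⁻¹ * C⁻¹ = E * (F * (F * E)) := by
    rw [h2, hSinv]
    simp only [Matrix.mul_assoc]
    rw [Matrix.mul_nonsing_inv_cancel_left _ _ hCd,
      Matrix.nonsing_inv_mul_cancel_left _ _ hCtd,
      Matrix.nonsing_inv_mul_cancel_left _ _ hηd,
      Matrix.mul_nonsing_inv _ hCd, mul_one]
  -- F * F = exp(2πi μ)
  have hFF : F * F = NormedSpace.exp ((2 * Real.pi * I) • (Matrix.diagonal μ)) := by
    rw [hF, ← Matrix.exp_add_of_commute _ _ (Commute.refl _), ← add_smul,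
      show ((Real.pi : ℂ) * I + (Real.pi : ℂ) * I) = 2 * Real.pi * I by ring]
  have hEE : E * E = NormedSpace.exp ((2 * Real.pi * I) • R) := by
    rw [hE, ← Matrix.exp_add_of_commute _ _ (Commute.refl _), ← add_smul,
      show ((Real.pi : ℂ) * I + (Real.pi : ℂ) * I) = 2 * Real.pi * I by ring]
  -- exp(2πi μ) commutes with R
  have hcomm : Commute (NormedSpace.exp ((2 * Real.pi * I) • (Matrix.diagonal μ))) R := by
    rw [← Matrix.diagonal_smul, Matrix.exp_diagonal]
    show _ * _ = _ * _
    ext α β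
    rw [Matrix.diagonal_mul, Matrix.mul_diagonal]
    by_cases h : R α β = 0
    · simp [h]
    · obtain ⟨k, hk⟩ := hR α β h
      have : NormedSpace.exp ((2 * Real.pi * I : ℂ) • μ) α =
          NormedSpace.exp ((2 * Real.pi * I : ℂ) • μ) β := by
        rw [Pi.coe_exp, Pi.coe_exp]
        simp only [Pi.smul_apply, smul_eq_mul, ← Complex.exp_eq_exp_ℂ]
        rw [Complex.exp_eq_exp_iff_exists_int]
        exact ⟨k, by rw [show μ α = μ β + k by linear_combination hk]; ring⟩
      rw [this, mul_comm]
  have hcommE : Commute (NormedSpace.exp ((2 * Real.pi * I) • (Matrix.diagonal μ))) E :=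
    Commute.exp_right (hcomm.smul_right _)
  rw [key, ← Matrix.mul_assoc F F E, hFF, ← Matrix.mul_assoc, ← hcommE.eq,
    Matrix.mul_assoc, hEE]
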